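/- Every partial $0$-cocycle $w \in Z^0(G,\mathcal{A})$ of a unital partial action $\alpha$ of $G$ on a commutative unital ring $\mathcal{A}$ is globalizable, and its globalization is unique: it is the constant function $u \in \mathcal{U}(\mathcal{F}(G,\mathcal{A}))$ with $u(t) = w$ for all $t$, which is an invertible multiplier of the enveloping ring $\mathcal{B}$ fixed by the action $\beta^*$. -/

import Mathlib

variable {G : Type*} [Group G]

/-- Ordered product `x₁ ⋯ x_k` of the first `k` entries of a tuple. -/
def pprodG {n : ℕ} (x : Fin n → G) (k : ℕ) : G := ((List.ofFn x).take k).prod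

/-- The tuple obtained from `(x₁,…,x_{n+1})` by multiplying the entries in positions
`i, i+1` (0-indexed). -/
def dface {n : ℕ} (i : Fin n) (x : Fin (n + 1) → G) : Fin n → G :=
  fun j => if (j : ℕ) < (i : ℕ) then x j.castSucc
    else if j = i then x i.castSucc * x i.succ
    else x j.succ

/-- A unital partial action of `G` on a commutative unital ring `A` (a unital partial
`G`-module): each domain `D g = (e g)·A` is generated by a central idempotent `e g`,
`D 1 = A`, and the partial isomorphisms `α g : D g⁻¹ → D g` (restrictions of the globally
defined maps `act g`) satisfy the partial action axioms. -/
structure UPA (G A : Type*) [Group G] [CommRing A] where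
  e : G → A
  idem : ∀ g, e g * e g = e g
  e_one : e 1 = 1
  act : G → A → A
  act_one : ∀ a, act 1 a = a
  act_mem : ∀ g a, e g⁻¹ * a = a → e g * act g a = act g a
  act_add : ∀ g a b, e g⁻¹ * a = a → e g⁻¹ * b = b → act g (a + b) = act g a + act g b
  act_mul : ∀ g a b, e g⁻¹ * a = a → e g⁻¹ * b = b → act g (a * b) = act g a * act g b
  act_e : ∀ g h, act g (e g⁻¹ * e h) = e g * e (g * h)
  act_inv : ∀ g a, e g⁻¹ * a = a → act g⁻¹ (act g a) = a
  act_comp : ∀ g h a, e h⁻¹ * e (h⁻¹ * g⁻¹) * a = a → act g (act h a) = act (g * h) a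

variable {A : Type*} [CommRing A]

/-- The idempotent `1_{(x₁,…,xₙ)} = 1_{x₁} 1_{x₁x₂} ⋯ 1_{x₁⋯xₙ}`. -/
def UPA.pe (S : UPA G A) {n : ℕ} (x : Fin n → G) : A :=
  ∏ i : Fin n, S.e (pprodG x ((i : ℕ) + 1))

/-- `w` is a partial `n`-cochain valued in the ideals `D_{(x₁,…,xₙ)}`. -/
def UPA.IsCochain (S : UPA G A) {n : ℕ} (w : (Fin n → G) → A) : Prop :=
  ∀ x, S.pe x * w x = w x

/-- `w, winv` are mutually inverse partial `n`-cochains (inverses in the unital ideals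
`D_{(x₁,…,xₙ)}` with identities `pe x`). -/
def UPA.InvPair (S : UPA G A) {n : ℕ} (w winv : (Fin n → G) → A) : Prop :=
  S.IsCochain w ∧ S.IsCochain winv ∧ ∀ x, w x * winv x = S.pe x

/-- `psel w winv k` is `w` for even `k` and `winv` for odd `k`: it implements the
exponent `(-1)^k` with inverses taken in the appropriate ideals. -/
def psel {n : ℕ} (w winv : (Fin n → G) → A) (k : ℕ) (y : Fin n → G) : A :=
  if Even k then w y else winv y

/-- The partial coboundary
`(δⁿ w)(x₁,…,x_{n+1}) = α_{x₁}(1_{x₁⁻¹} w(x₂,…,x_{n+1})) ·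
∏ᵢ w(x₁,…,xᵢxᵢ₊₁,…,x_{n+1})^{(-1)ᶦ} · w(x₁,…,xₙ)^{(-1)^{n+1}}`,
computed with a chosen ideal-inverse `winv` of `w`. -/
def UPA.pdelta (S : UPA G A) {n : ℕ} (w winv : (Fin n → G) → A)
    (x : Fin (n + 1) → G) : A :=
  S.act (x 0) (S.e (x 0)⁻¹ * w (Fin.tail x)) *
    (∏ i : Fin n, psel w winv ((i : ℕ) + 1) (dface i x)) *
    psel w winv (n + 1) (Fin.init x)

/-- `w` (with ideal-inverse `winv`) is a partial `n`-cocycle: `δⁿ w = e_{n+1}`. -/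
def UPA.IsCocyclePair (S : UPA G A) {n : ℕ} (w winv : (Fin n → G) → A) : Prop :=
  S.InvPair w winv ∧ ∀ x : Fin (n + 1) → G, S.pdelta w winv x = S.pe x

/-- The canonical embedding `φ : A → F(G,A)`, `φ(a)(t) = α_{t⁻¹}(1_t a)`. -/
def UPA.emb (S : UPA G A) (a : A) : G → A := fun t => S.act t⁻¹ (S.e t * a)

/-- The translation action `β_x(f)(t) = f(x⁻¹ t)` on `F(G,A)`. -/
def tr (x : G) (f : G → A) : G → A := fun t => f (x⁻¹ * t)

/-- The enveloping ring `B = Σ_{g ∈ G} β_g(φ(A)) ⊆ F(G,A)` of the partial action. -/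
def UPA.env (S : UPA G A) : NonUnitalSubring (G → A) :=
  NonUnitalSubring.closure {f | ∃ g a, f = tr g (S.emb a)}

/-- `m` is a multiplier of the enveloping ring `B`: it preserves `B`, is additive on `B`,
and satisfies `m(fg) = m(f)g` (in the commutative setting this is a full multiplier). -/
def UPA.IsMultB (S : UPA G A) (m : (G → A) → (G → A)) : Prop :=
  (∀ f ∈ S.env, m f ∈ S.env) ∧
  (∀ f g, f ∈ S.env → g ∈ S.env → m (f + g) = m f + m g) ∧
  (∀ f g, f ∈ S.env → g ∈ S.env → m (f * g) = m f * g)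

/-- `m, m'` are mutually inverse (invertible) multipliers of the enveloping ring `B`. -/
def UPA.InvMultPair (S : UPA G A) (m m' : (G → A) → (G → A)) : Prop :=
  S.IsMultB m ∧ S.IsMultB m' ∧ ∀ f ∈ S.env, m (m' f) = f ∧ m' (m f) = f

/-- The action `β*` of `G` on multipliers of `B`: `β*_x(m) = β_x ∘ m ∘ β_x⁻¹`. -/
def bstar (x : G) (m : (G → A) → (G → A)) : (G → A) → (G → A) :=
  fun f => tr x (m (tr x⁻¹ f))

/-- `msel u uinv k` is `u` for even `k` and `uinv` for odd `k` (the exponent `(-1)^k`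
in the group of invertible multipliers). -/
def msel {n : ℕ} (u uinv : (Fin n → G) → (G → A) → (G → A)) (k : ℕ)
    (y : Fin n → G) : (G → A) → (G → A) :=
  if Even k then u y else uinv y

/-- The (multiplicatively written) classical coboundary of a multiplier-valued cochain:
`(δⁿ u)(x₁,…,x_{n+1}) = β*_{x₁}(u(x₂,…,x_{n+1})) · ∏ᵢ u(x₁,…,xᵢxᵢ₊₁,…)^{(-1)ᶦ} ·
u(x₁,…,xₙ)^{(-1)^{n+1}}`, the product being composition of multipliers. -/
def mdelta {n : ℕ} (u uinv : (Fin n → G) → (G → A) → (G → A))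
    (x : Fin (n + 1) → G) : (G → A) → (G → A) :=
  bstar (x 0) (u (Fin.tail x)) ∘
    (List.ofFn (fun i : Fin n => msel u uinv ((i : ℕ) + 1) (dface i x))).foldr (· ∘ ·) id ∘
    msel u uinv (n + 1) (Fin.init x)

/-- `u` (with pointwise inverse `uinv`) is a classical `n`-cocycle of `G` with values in
the unit group of the multiplier ring of the enveloping ring `B`, for the action `β*`. -/
def UPA.GCocyclePair (S : UPA G A) {n : ℕ}
    (u uinv : (Fin n → G) → (G → A) → (G → A)) : Prop :=
  (∀ x, S.InvMultPair (u x) (uinv x)) ∧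
  ∀ (x : Fin (n + 1) → G), ∀ f ∈ S.env, mdelta u uinv x f = f

/-- `u` is a globalization of the partial `n`-cocycle `w`:
`φ(w(x₁,…,xₙ)) = φ(1_{(x₁,…,xₙ)}) · u(x₁,…,xₙ)`. -/
def UPA.Globalizes (S : UPA G A) {n : ℕ}
    (u : (Fin n → G) → (G → A) → (G → A)) (w : (Fin n → G) → A) : Prop :=
  ∀ x, u x (S.emb (S.pe x)) = S.emb (w x)


section Aux
variable (S : UPA G A)

lemma UPA.e_mem (a : A) (g : G) : S.e g * (S.e g * a) = S.e g * a := by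
  rw [← mul_assoc, S.idem]

lemma UPA.emb_pt_mul (v : A) (hzv : ∀ x : G, S.act x (S.e x⁻¹ * v) = S.e x * v)
    (a : A) (t : G) : v * S.emb a t = S.emb (v * a) t := by
  have h1 : S.act t⁻¹ (S.e t * v) = S.e t⁻¹ * v := by
    have := hzv t⁻¹; rwa [inv_inv] at this
  have hmem : S.e t⁻¹ * S.emb a t = S.emb a t := by
    apply S.act_mem; rw [inv_inv]; exact S.e_mem a t
  have hmul := (S.act_mul t⁻¹ (S.e t * v) (S.e t * a)
    (by rw [inv_inv]; exact S.e_mem v t) (by rw [inv_inv]; exact S.e_mem a t)).symm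
  have hprod : (S.e t * v) * (S.e t * a) = S.e t * (v * a) := by
    calc (S.e t * v) * (S.e t * a) = (S.e t * S.e t) * (v * a) := by ring
      _ = S.e t * (v * a) := by rw [S.idem]
  calc v * S.emb a t = (S.e t⁻¹ * v) * S.emb a t := by
        rw [mul_comm (S.e t⁻¹) v, mul_assoc, hmem]
    _ = S.act t⁻¹ (S.e t * v) * S.act t⁻¹ (S.e t * a) := by rw [h1]; rfl
    _ = S.act t⁻¹ ((S.e t * v) * (S.e t * a)) := hmul
    _ = S.emb (v * a) t := by rw [hprod]; rfl

lemma UPA.emb_mem (a : A) : S.emb a ∈ S.env := by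
  apply NonUnitalSubring.subset_closure
  exact ⟨1, a, by funext t; simp [tr]⟩

lemma UPA.tr_emb_mem (g : G) (a : A) : tr g (S.emb a) ∈ S.env :=
  NonUnitalSubring.subset_closure ⟨g, a, rfl⟩

lemma UPA.hz_inv (w winv : A) (hunit : w * winv = 1)
    (hz : ∀ x : G, S.act x (S.e x⁻¹ * w) = S.e x * w) :
    ∀ x : G, S.act x (S.e x⁻¹ * winv) = S.e x * winv := by
  intro x
  have hmem : S.e x * S.act x (S.e x⁻¹ * winv) = S.act x (S.e x⁻¹ * winv) := by
    apply S.act_mem; exact S.e_mem winv x⁻¹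
  have hmul := (S.act_mul x (S.e x⁻¹ * winv) (S.e x⁻¹ * w)
    (S.e_mem winv x⁻¹) (S.e_mem w x⁻¹)).symm
  have h2 : (S.e x⁻¹ * winv) * (S.e x⁻¹ * w) = S.e x⁻¹ * S.e 1 := by
    rw [S.e_one, mul_one]
    calc (S.e x⁻¹ * winv) * (S.e x⁻¹ * w) = (S.e x⁻¹ * S.e x⁻¹) * (winv * w) := by ring
      _ = S.e x⁻¹ := by rw [S.idem, mul_comm winv w, hunit, mul_one]
  have h3 : S.act x (S.e x⁻¹ * S.e 1) = S.e x := by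
    rw [S.act_e, mul_one, S.idem]
  have key : S.act x (S.e x⁻¹ * winv) * (S.e x * w) = S.e x := by
    rw [← hz x, hmul, h2, h3]
  have h4 : S.act x (S.e x⁻¹ * winv) * (S.e x * w) * winv = S.e x * winv := by
    rw [key]
  have h5 : S.act x (S.e x⁻¹ * winv) * (S.e x * w) * winv
      = S.act x (S.e x⁻¹ * winv) := by
    calc S.act x (S.e x⁻¹ * winv) * (S.e x * w) * winv
        = (S.e x * S.act x (S.e x⁻¹ * winv)) * (w * winv) := by ring
      _ = S.act x (S.e x⁻¹ * winv) := by rw [hunit, hmem, mul_one]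
  exact h5.symm.trans h4

lemma UPA.mult_of_hz (v : A) (hzv : ∀ x : G, S.act x (S.e x⁻¹ * v) = S.e x * v) :
    S.IsMultB (fun f t => v * f t) := by
  refine ⟨?_, fun f g _ _ => by funext t; simp [mul_add], fun f g _ _ => by
    funext t; simp [Pi.mul_apply, mul_assoc]⟩
  intro f hf
  induction hf using NonUnitalSubring.closure_induction with
  | mem x hx =>
      obtain ⟨g, a, rfl⟩ := hx
      have : (fun t => v * tr g (S.emb a) t) = tr g (S.emb (v * a)) := by
        funext t; exact S.emb_pt_mul v hzv a (g⁻¹ * t)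
      show (fun t => v * tr g (S.emb a) t) ∈ S.env
      rw [this]; exact S.tr_emb_mem g (v * a)
  | zero => convert (S.env).zero_mem using 1; funext t; simp
  | add x y hx hy ihx ihy =>
      have : (fun t => v * (x + y) t) = (fun t => v * x t) + (fun t => v * y t) := by
        funext t; simp [mul_add]
      show (fun t => v * (x + y) t) ∈ S.env
      rw [this]; exact add_mem ihx ihy
  | neg x hx ihx =>
      have : (fun t => v * (-x) t) = -(fun t => v * x t) := by
        funext t; simp
      show (fun t => v * (-x) t) ∈ S.env
      rw [this]; exact neg_mem ihx
  | mul x y hx hy ihx ihy =>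
      have : (fun t => v * (x * y) t) = (fun t => v * x t) * y := by
        funext t; simp [Pi.mul_apply, mul_assoc]
      show (fun t => v * (x * y) t) ∈ S.env
      rw [this]; exact mul_mem ihx hy

end Aux

/-- Every partial `0`-cocycle `w` (an invertible element of `A` with
`α_x(1_{x⁻¹} w) = 1_x w` for all `x`) is globalizable, and its globalization is unique:
it is the constant function `u` with `u(t) = w`, which is an invertible multiplier of the
enveloping ring `B` fixed by the action `β*`, it satisfies `φ(w) = φ(1_A)·u`, and any
`β*`-invariant invertible multiplier `m` of `B` with `φ(w) = φ(1_A)·m` coincides with `u`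
on `B`. -/
theorem stmt10 (S : UPA G A) (w winv : A) (hunit : w * winv = 1)
    (hz : ∀ x : G, S.act x (S.e x⁻¹ * w) = S.e x * w) :
    let mu : (G → A) → (G → A) := fun f t => w * f t
    let mu' : (G → A) → (G → A) := fun f t => winv * f t
    S.InvMultPair mu mu' ∧
    (∀ (x : G), ∀ f ∈ S.env, bstar x mu f = mu f) ∧
    mu (S.emb 1) = S.emb w ∧
    (∀ m m' : (G → A) → (G → A), S.InvMultPair m m' →
      (∀ (x : G), ∀ f ∈ S.env, bstar x m f = m f) →
      m (S.emb 1) = S.emb w → ∀ f ∈ S.env, m f = mu f) := by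
  intro mu mu'
  have hz' := S.hz_inv w winv hunit hz
  have hmu : S.IsMultB mu := S.mult_of_hz w hz
  have hmu' : S.IsMultB mu' := S.mult_of_hz winv hz'
  have hmuval : ∀ a : A, mu (S.emb a) = S.emb (w * a) := fun a => by
    funext t; exact S.emb_pt_mul w hz a t
  refine ⟨⟨hmu, hmu', fun f _ => ?_⟩, fun x f _ => ?_, ?_, ?_⟩
  · constructor <;> (funext t; show _ * (_ * _) = _) <;>
      [rw [← mul_assoc, hunit, one_mul]; rw [← mul_assoc, mul_comm winv w, hunit, one_mul]]
  · funext t; simp [bstar, tr, mu]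
  · simpa using hmuval 1
  · intro m m' hmpair hminv hmval f hf
    -- first: m agrees with mu on emb a
    have hemb1 : ∀ a : A, S.emb 1 * S.emb a = S.emb a := by
      intro a; funext t
      show S.act t⁻¹ (S.e t * 1) * S.act t⁻¹ (S.e t * a) = S.act t⁻¹ (S.e t * a)
      rw [← S.act_mul t⁻¹ _ _ (by rw [inv_inv]; exact S.e_mem 1 t)
        (by rw [inv_inv]; exact S.e_mem a t)]
      congr 1
      rw [mul_one, ← mul_assoc, S.idem]
    have hembw : ∀ a : A, S.emb w * S.emb a = S.emb (w * a) := by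
      intro a; funext t
      show S.act t⁻¹ (S.e t * w) * S.act t⁻¹ (S.e t * a) = S.act t⁻¹ (S.e t * (w * a))
      rw [← S.act_mul t⁻¹ _ _ (by rw [inv_inv]; exact S.e_mem w t)
        (by rw [inv_inv]; exact S.e_mem a t)]
      congr 1
      calc S.e t * w * (S.e t * a) = (S.e t * S.e t) * (w * a) := by ring
        _ = S.e t * (w * a) := by rw [S.idem]
    have hm0 : m 0 = 0 := by
      have h := hmpair.1.2.1 0 0 (S.env).zero_mem (S.env).zero_mem
      rw [add_zero] at h
      exact left_eq_add.mp h
    have hmemb : ∀ a : A, m (S.emb a) = mu (S.emb a) := by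
      intro a
      have h1 : m (S.emb 1 * S.emb a) = m (S.emb 1) * S.emb a :=
        hmpair.1.2.2 _ _ (S.emb_mem 1) (S.emb_mem a)
      rw [hemb1] at h1
      rw [h1, hmval, hembw, hmuval]
    have htrtr : ∀ (g : G) (h : G → A), tr g⁻¹ (tr g h) = h := by
      intro g h; funext s; simp [tr, ← mul_assoc]
    induction hf using NonUnitalSubring.closure_induction with
    | mem x hx =>
        obtain ⟨g, a, rfl⟩ := hx
        have h1 := hminv g (tr g (S.emb a)) (S.tr_emb_mem g a)
        rw [bstar, htrtr] at h1
        rw [← h1, hmemb]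
        funext t; simp [tr, mu]
    | zero => rw [hm0]; funext t; simp [mu]
    | add x y hx hy ihx ihy =>
        rw [hmpair.1.2.1 x y hx hy, ihx, ihy]
        funext t; simp [mu, mul_add]
    | neg x hx ihx =>
        have h := hmpair.1.2.1 x (-x) hx (neg_mem hx)
        rw [add_neg_cancel, hm0] at h
        have : m (-x) = -(m x) := by linear_combination -h
        rw [this, ihx]
        funext t; simp [mu]
    | mul x y hx hy ihx ihy =>
        rw [hmpair.1.2.2 x y hx hy, ihx]
        funext t; simp [mu, Pi.mul_apply, mul_assoc]
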